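/- Lifting initiality: under the hypotheses of the previous theorem (initial (Id+H)-algebra exists and −·Z has a right adjoint for all pointed (Z,e)), the substitution system (T,α,⦃−⦄) constructed on the initial (Id+H)-algebra is an initial object in the category HSS(H,θ) of heterogeneous substitution systems. -/

import Mathlib

open CategoryTheory Limits

universe v u

/-- A pointed endofunctor on `C`. -/
structure Ptd (C : Type u) [Category.{v} C] where
  Z : C ⥤ C
  e : 𝟭 C ⟶ Z

/-- A *signature* over `C`: an endofunctor `H` on the endofunctor category `[C,C]`
together with a strength `θ : (H −)·U∼ ⟶ H (−·U∼)`, natural in both variables and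
satisfying the unit and composition coherence laws (here `X·Z` is the composite
`Z ⋙ X`, i.e. `A ↦ X (Z A)`). -/
structure Signature (C : Type u) [Category.{v} C] where
  H : (C ⥤ C) ⥤ (C ⥤ C)
  θ : ∀ (X : C ⥤ C) (Z : Ptd C), (Z.Z ⋙ H.obj X) ⟶ H.obj (Z.Z ⋙ X)
  θ_nat_X : ∀ {X X' : C ⥤ C} (α : X ⟶ X') (Z : Ptd C),
      Functor.whiskerLeft Z.Z (H.map α) ≫ θ X' Z = θ X Z ≫ H.map (Functor.whiskerLeft Z.Z α)
  θ_nat_Z : ∀ (X : C ⥤ C) {Z Z' : Ptd C} (g : Z.Z ⟶ Z'.Z), Z.e ≫ g = Z'.e →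
      Functor.whiskerRight g (H.obj X) ≫ θ X Z' = θ X Z ≫ H.map (Functor.whiskerRight g X)
  θ_id : ∀ X : C ⥤ C,
      θ X ⟨𝟭 C, 𝟙 (𝟭 C)⟩ =
        (Functor.leftUnitor (H.obj X)).hom ≫ H.map (Functor.leftUnitor X).inv
  θ_comp : ∀ (X : C ⥤ C) (Z Z' : Ptd C),
      θ X ⟨Z.Z ⋙ Z'.Z, Z.e ≫ Functor.whiskerLeft Z.Z Z'.e⟩ =
        (Functor.associator Z.Z Z'.Z (H.obj X)).hom ≫
          Functor.whiskerLeft Z.Z (θ X Z') ≫ θ (Z'.Z ⋙ X) Z ≫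
          H.map (Functor.associator Z.Z Z'.Z X).inv

variable {C : Type u} [Category.{v} C]

/-- A *heterogeneous substitution system* for a signature `(H, θ)`:
an `(Id + H)`-algebra, presented by its components `η : Id ⟶ T` and `τ : H T ⟶ T`,
together with, for every morphism of pointed endofunctors `f : (Z,e) ⟶ (T,η)`,
a unique bracket `⦃f⦄ : T·Z ⟶ T` satisfying the two substitution equations. -/
structure HSS (S : Signature C) where
  T : C ⥤ C
  η : 𝟭 C ⟶ T
  τ : S.H.obj T ⟶ T
  bracket : ∀ (Z : Ptd C) (f : Z.Z ⟶ T), Z.e ≫ f = η → (Z.Z ⋙ T ⟶ T)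
  bracket_η : ∀ (Z : Ptd C) (f : Z.Z ⟶ T) (hf : Z.e ≫ f = η),
      Functor.whiskerLeft Z.Z η ≫ bracket Z f hf = f
  bracket_τ : ∀ (Z : Ptd C) (f : Z.Z ⟶ T) (hf : Z.e ≫ f = η),
      Functor.whiskerLeft Z.Z τ ≫ bracket Z f hf = S.θ T Z ≫ S.H.map (bracket Z f hf) ≫ τ
  bracket_unique : ∀ (Z : Ptd C) (f : Z.Z ⟶ T) (hf : Z.e ≫ f = η)
      (h : Z.Z ⋙ T ⟶ T),
      Functor.whiskerLeft Z.Z η ≫ h = f →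
      Functor.whiskerLeft Z.Z τ ≫ h = S.θ T Z ≫ S.H.map h ≫ τ →
      h = bracket Z f hf

/-- A morphism of heterogeneous substitution systems: an `(Id+H)`-algebra morphism
compatible with the brackets on either side. -/
structure HSSHom {S : Signature C} (A B : HSS S) where
  β : A.T ⟶ B.T
  hη : A.η ≫ β = B.η
  hτ : A.τ ≫ β = S.H.map β ≫ B.τ
  hbr : ∀ (Z : Ptd C) (f : Z.Z ⟶ A.T) (hf : Z.e ≫ f = A.η)
      (hf' : Z.e ≫ (f ≫ β) = B.η),
    A.bracket Z f hf ≫ β = Functor.whiskerLeft Z.Z β ≫ B.bracket Z (f ≫ β) hf'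

theorem HSSHom.ext' {S : Signature C} {A B : HSS S} (g h : HSSHom A B)
    (w : g.β = h.β) : g = h := by
  cases g; cases h; cases w; rfl

instance HSScat (S : Signature C) : Category (HSS S) where
  Hom := HSSHom
  id A := { β := 𝟙 A.T
            hη := Category.comp_id _
            hτ := by simp
            hbr := by intro Z f hf hf'; simp }
  comp {A B D} g h :=
    { β := g.β ≫ h.β
      hη := by rw [← Category.assoc, g.hη, h.hη]
      hτ := by rw [← Category.assoc, g.hτ, Category.assoc, h.hτ, ← Category.assoc,
        ← Functor.map_comp]
      hbr := by
        intro Z f hf hf'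
        have h1 : Z.e ≫ (f ≫ g.β) = B.η := by rw [← Category.assoc, hf, g.hη]
        have h2 : Z.e ≫ ((f ≫ g.β) ≫ h.β) = D.η := by
          rw [← Category.assoc, h1, h.hη]
        rw [← Category.assoc, g.hbr Z f hf h1, Category.assoc,
          h.hbr Z (f ≫ g.β) h1 h2]
        simp }
  id_comp g := HSSHom.ext' _ _ (Category.id_comp g.β)
  comp_id g := HSSHom.ext' _ _ (Category.comp_id g.β)
  assoc f g h := HSSHom.ext' _ _ (Category.assoc f.β g.β h.β)

/-- Key uniqueness lemma (generalized Mendler iteration via adjoints): any two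
morphisms `Z ⋙ T ⟶ T'` satisfying the two bracket-style equations agree,
because their adjoint transposes are both algebra morphisms out of the
initial `(Id+H)`-algebra. -/
theorem hss_aux_unique (S : Signature C) (Thss : HSS S)
    (hinitalg : ∀ (T' : C ⥤ C) (η' : 𝟭 C ⟶ T') (τ' : S.H.obj T' ⟶ T'),
      ∃! β : Thss.T ⟶ T', Thss.η ≫ β = η' ∧ Thss.τ ≫ β = S.H.map β ≫ τ')
    (Z : Ptd C) (R : (C ⥤ C) ⥤ (C ⥤ C))
    (adj : ((Functor.whiskeringLeft C C C).obj Z.Z) ⊣ R)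
    (T' : C ⥤ C) (τ' : S.H.obj T' ⟶ T') (g : Z.Z ⋙ (𝟭 C) ⟶ T')
    (h₁ h₂ : Z.Z ⋙ Thss.T ⟶ T')
    (e₁ : Functor.whiskerLeft Z.Z Thss.η ≫ h₁ = g)
    (t₁ : Functor.whiskerLeft Z.Z Thss.τ ≫ h₁ = S.θ Thss.T Z ≫ S.H.map h₁ ≫ τ')
    (e₂ : Functor.whiskerLeft Z.Z Thss.η ≫ h₂ = g)
    (t₂ : Functor.whiskerLeft Z.Z Thss.τ ≫ h₂ = S.θ Thss.T Z ≫ S.H.map h₂ ≫ τ') :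
    h₁ = h₂ := by
  set L := ((Functor.whiskeringLeft C C C).obj Z.Z) with hL
  -- algebra structure on `R T'`
  set η'' : 𝟭 C ⟶ R.obj T' := adj.homEquiv (𝟭 C) T' g with hη''
  set τ'' : S.H.obj (R.obj T') ⟶ R.obj T' :=
    adj.homEquiv (S.H.obj (R.obj T')) T'
      (S.θ (R.obj T') Z ≫ S.H.map (adj.counit.app T') ≫ τ') with hτ''
  have key : ∀ h : Z.Z ⋙ Thss.T ⟶ T',
      Functor.whiskerLeft Z.Z Thss.η ≫ h = g →
      Functor.whiskerLeft Z.Z Thss.τ ≫ h = S.θ Thss.T Z ≫ S.H.map h ≫ τ' →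
      Thss.η ≫ adj.homEquiv Thss.T T' h = η'' ∧
      Thss.τ ≫ adj.homEquiv Thss.T T' h
        = S.H.map (adj.homEquiv Thss.T T' h) ≫ τ'' := by
    intro h eh th
    set hhat : Thss.T ⟶ R.obj T' := adj.homEquiv Thss.T T' h with hhat_def
    have hback : h = Functor.whiskerLeft Z.Z hhat ≫ adj.counit.app T' := by
      have : (adj.homEquiv Thss.T T').symm hhat = L.map hhat ≫ adj.counit.app T' :=
        adj.homEquiv_counit _ _ _
      rw [hhat_def, Equiv.symm_apply_apply] at this
      exact this
    constructor
    · -- unit condition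
      rw [hη'', ← eh]
      have : Functor.whiskerLeft Z.Z Thss.η ≫ h = L.map Thss.η ≫ h := rfl
      rw [this, ← Adjunction.homEquiv_naturality_left adj Thss.η h]
    · -- algebra map condition
      have step : S.θ Thss.T Z ≫ S.H.map h ≫ τ'
          = L.map (S.H.map hhat) ≫
            (S.θ (R.obj T') Z ≫ S.H.map (adj.counit.app T') ≫ τ') := by
        conv_lhs => rw [hback]
        have hnat := S.θ_nat_X hhat Z
        have : S.H.map (Functor.whiskerLeft Z.Z hhat ≫ adj.counit.app T')
            = S.H.map (Functor.whiskerLeft Z.Z hhat) ≫ S.H.map (adj.counit.app T') :=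
          S.H.map_comp _ _
        rw [this]
        have assoc1 : S.θ Thss.T Z ≫ S.H.map (Functor.whiskerLeft Z.Z hhat)
            = Functor.whiskerLeft Z.Z (S.H.map hhat) ≫ S.θ (R.obj T') Z := hnat.symm
        calc S.θ Thss.T Z ≫ (S.H.map (Functor.whiskerLeft Z.Z hhat)
                ≫ S.H.map (adj.counit.app T')) ≫ τ'
            = (S.θ Thss.T Z ≫ S.H.map (Functor.whiskerLeft Z.Z hhat))
                ≫ S.H.map (adj.counit.app T') ≫ τ' := by simp only [Category.assoc]
          _ = (Functor.whiskerLeft Z.Z (S.H.map hhat) ≫ S.θ (R.obj T') Z)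
                ≫ S.H.map (adj.counit.app T') ≫ τ' := by rw [assoc1]
          _ = L.map (S.H.map hhat) ≫
                (S.θ (R.obj T') Z ≫ S.H.map (adj.counit.app T') ≫ τ') := by
                simp only [Category.assoc]; rfl
      have lhs : Functor.whiskerLeft Z.Z Thss.τ ≫ h = L.map Thss.τ ≫ h := rfl
      rw [lhs] at th
      have := congrArg (adj.homEquiv (S.H.obj Thss.T) T') th
      rw [Adjunction.homEquiv_naturality_left adj Thss.τ h] at this
      rw [step, Adjunction.homEquiv_naturality_left adj (S.H.map hhat)] at this
      exact this
  obtain ⟨β0, -, huniq⟩ := hinitalg (R.obj T') η'' τ''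
  have k₁ := key h₁ e₁ t₁
  have k₂ := key h₂ e₂ t₂
  have q₁ : adj.homEquiv Thss.T T' h₁ = β0 := huniq _ k₁
  have q₂ : adj.homEquiv Thss.T T' h₂ = β0 := huniq _ k₂
  have : adj.homEquiv Thss.T T' h₁ = adj.homEquiv Thss.T T' h₂ := q₁.trans q₂.symm
  exact (adj.homEquiv Thss.T T').injective this

/-- **Lifting initiality** (via the fusion law): under the hypotheses of the
construction of a substitution system on an initial algebra (the carrier `(T,η,τ)`
of the substitution system is an initial `(Id+H)`-algebra, and `−·Z` has a right
adjoint for every pointed `(Z,e)`), the substitution system built on the initial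
`(Id+H)`-algebra is an initial object of the category `HSS(H,θ)` of heterogeneous
substitution systems. -/
theorem initial_hss (S : Signature C) (Thss : HSS S)
    (hadj : ∀ Z : Ptd C, ∃ R : (C ⥤ C) ⥤ (C ⥤ C),
      Nonempty (((Functor.whiskeringLeft C C C).obj Z.Z) ⊣ R))
    -- `(T, η, τ)` is an initial `(Id+H)`-algebra:
    (hinitalg : ∀ (T' : C ⥤ C) (η' : 𝟭 C ⟶ T') (τ' : S.H.obj T' ⟶ T'),
      ∃! β : Thss.T ⟶ T', Thss.η ≫ β = η' ∧ Thss.τ ≫ β = S.H.map β ≫ τ') :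
    Nonempty (Limits.IsInitial Thss) := by
  constructor
  refine Limits.IsInitial.ofUniqueHom (fun A => ?_) (fun A m => ?_)
  · -- construction of the morphism
    have hex := hinitalg A.T A.η A.τ
    set β := hex.choose with hβdef
    have hβη := hex.choose_spec.1.1
    have hβτ := hex.choose_spec.1.2
    exact
      { β := β
        hη := hβη
        hτ := hβτ
        hbr := by
          intro Z f hf hf'
          obtain ⟨R, ⟨adj⟩⟩ := hadj Z
          apply hss_aux_unique S Thss hinitalg Z R adj A.T A.τ (f ≫ β)
          · -- unit law for LHS
            rw [← Category.assoc, Thss.bracket_η Z f hf]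
          · -- algebra law for LHS
            rw [← Category.assoc, Thss.bracket_τ Z f hf]
            simp only [Category.assoc]
            rw [hβτ, ← Category.assoc (S.H.map (Thss.bracket Z f hf)),
              ← S.H.map_comp]
          · -- unit law for RHS
            rw [← Functor.whiskerLeft_comp_assoc, hβη, A.bracket_η Z (f ≫ β) hf']
          · -- algebra law for RHS
            rw [← Functor.whiskerLeft_comp_assoc, hβτ, Functor.whiskerLeft_comp, Category.assoc,
              A.bracket_τ Z (f ≫ β) hf']
            have hnat := S.θ_nat_X β Z
            rw [← Category.assoc, hnat, Category.assoc, ← Category.assoc (S.H.map _),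
              ← S.H.map_comp] }
  · -- uniqueness
    apply HSSHom.ext'
    exact (hinitalg A.T A.η A.τ).choose_spec.2 m.β ⟨m.hη, m.hτ⟩
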